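/- Every A-type quantum walk with an arbitrary shift family can be expressed through an A-type quantum walk with flip-flop shift: for every shift family σ and every coin H = (H_j)_{j∈V}, letting P^{(j)} be the permutation matrix on ℂ^{N(j)} representing σ_j and H̃_j = H_j P^{(j)}, one has U^A_σ[H_j : j∈V] = S_σ · (U^A_{ff}[H̃_j† : j∈V])† · S_σ†. -/

import Mathlib

open Matrix Complex BigOperators

section QWFramework

variable {V : Type*}

instance arcDecPred (G : SimpleGraph V) [DecidableRel G.Adj] :
    DecidablePred fun p : V × V => G.Adj p.1 p.2 :=
  fun p => inferInstanceAs (Decidable (G.Adj p.1 p.2))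

instance nbrDecPred (G : SimpleGraph V) [DecidableRel G.Adj] (u : V) :
    DecidablePred (G.Adj u) :=
  fun w => inferInstanceAs (Decidable (G.Adj u w))

/-- The symmetric arc set `D(G)` of a graph: ordered pairs of adjacent vertices. -/
abbrev Arc (G : SimpleGraph V) : Type _ := {p : V × V // G.Adj p.1 p.2}

variable [Fintype V] [DecidableEq V]

/-- The shift (permutation) operator `S_σ` of a shift family `σ`, acting on `ℂ^{D(G)}`
by `S_σ |i,j⟩ = |j, σ_j(i)⟩`. -/
noncomputable def shiftOp (G : SimpleGraph V) [DecidableRel G.Adj]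
    (σ : ∀ u : V, Equiv.Perm {w : V // G.Adj u w}) :
    Matrix (Arc G) (Arc G) ℂ :=
  fun a b => if a.1.1 = b.1.2 ∧ a.1.2 = (σ b.1.2 ⟨b.1.1, b.2.symm⟩).1 then 1 else 0

/-- The flip-flop shift family: the identity permutation at every vertex. -/
def ffFam (G : SimpleGraph V) : ∀ u : V, Equiv.Perm {w : V // G.Adj u w} :=
  fun _ => Equiv.refl _

/-- The flip-flop shift operator `S`, with `S|i,j⟩ = |j,i⟩`. -/
noncomputable def ffShift (G : SimpleGraph V) [DecidableRel G.Adj] : Matrix (Arc G) (Arc G) ℂ :=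
  shiftOp G (ffFam G)

/-- The block-diagonal coin operator `C = ⊕_u H_u`, acting by
`C|i,j⟩ = Σ_{k∈N(i)} (H_i)_{k,j} |i,k⟩`. -/
noncomputable def coinOp (G : SimpleGraph V) [DecidableRel G.Adj]
    (H : ∀ u : V, Matrix {w : V // G.Adj u w} {w : V // G.Adj u w} ℂ) :
    Matrix (Arc G) (Arc G) ℂ :=
  fun a b => if h : a.1.1 = b.1.1 then H b.1.1 ⟨a.1.2, by rw [← h]; exact a.2⟩ ⟨b.1.2, b.2⟩ else 0

/-- The G-type (Gudder type) coined quantum walk `U^G_σ[H] = C·S_σ`. -/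
noncomputable def gWalk (G : SimpleGraph V) [DecidableRel G.Adj]
    (σ : ∀ u : V, Equiv.Perm {w : V // G.Adj u w})
    (H : ∀ u : V, Matrix {w : V // G.Adj u w} {w : V // G.Adj u w} ℂ) :
    Matrix (Arc G) (Arc G) ℂ :=
  coinOp G H * shiftOp G σ

/-- The A-type (Ambainis type) coined quantum walk `U^A_σ[H] = S_σ·C`. -/
noncomputable def aWalk (G : SimpleGraph V) [DecidableRel G.Adj]
    (σ : ∀ u : V, Equiv.Perm {w : V // G.Adj u w})
    (H : ∀ u : V, Matrix {w : V // G.Adj u w} {w : V // G.Adj u w} ℂ) :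
    Matrix (Arc G) (Arc G) ℂ :=
  shiftOp G σ * coinOp G H

end QWFramework

/-- The permutation matrix of a permutation `π`, sending the basis vector `e_b` to `e_{π b}`. -/
noncomputable def permMat {α : Type*} [Fintype α] [DecidableEq α] (π : Equiv.Perm α) :
    Matrix α α ℂ :=
  fun a b => if a = π b then 1 else 0

section AuxLemmas

lemma permMat_conjT {α : Type*} [Fintype α] [DecidableEq α] (π : Equiv.Perm α) :
    (permMat π)ᴴ = permMat π⁻¹ := by
  ext a b
  simp only [permMat, Matrix.conjTranspose_apply]
  by_cases h : b = π a
  · rw [if_pos h, if_pos (by rw [h]; simp)]; simp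
  · rw [if_neg h, if_neg (fun h' => h (by rw [h']; simp))]; simp

lemma permMat_mul {α : Type*} [Fintype α] [DecidableEq α] (π τ : Equiv.Perm α) :
    permMat π * permMat τ = permMat (π * τ) := by
  ext a b
  rw [Matrix.mul_apply]
  have : ∀ c, (permMat π a c) * (permMat τ c b)
      = if c = τ b then permMat π a c else 0 := by
    intro c; simp only [permMat]; split_ifs <;> simp
  rw [Finset.sum_congr rfl fun c _ => this c, Finset.sum_ite_eq' Finset.univ (τ b)]
  simp [permMat, Equiv.Perm.mul_apply]
  exact if_congr Iff.rfl rfl rfl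

lemma permMat_one {α : Type*} [Fintype α] [DecidableEq α] :
    permMat (1 : Equiv.Perm α) = 1 := by
  ext a b
  simp [permMat, Matrix.one_apply]
  exact if_congr Iff.rfl rfl rfl

lemma permMat_mul_conjT_self {α : Type*} [Fintype α] [DecidableEq α] (π : Equiv.Perm α) :
    permMat π * (permMat π)ᴴ = 1 := by
  rw [permMat_conjT, permMat_mul, mul_inv_cancel, permMat_one]

variable {V : Type*} [Fintype V] [DecidableEq V]

/-- The bijection `Σ u, N(u) ≃ D(G)`. -/
def arcSigma (G : SimpleGraph V) [DecidableRel G.Adj] :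
    (Σ u : V, {w : V // G.Adj u w}) ≃ Arc G where
  toFun x := ⟨(x.1, x.2.1), x.2.2⟩
  invFun a := ⟨a.1.1, ⟨a.1.2, a.2⟩⟩
  left_inv := by rintro ⟨u, w, h⟩; rfl
  right_inv := by rintro ⟨⟨u, w⟩, h⟩; rfl

/-- The arc permutation `(i,j) ↦ (j, σ_j(i))` induced by a shift family. -/
def arcPerm (G : SimpleGraph V) [DecidableRel G.Adj]
    (σ : ∀ u : V, Equiv.Perm {w : V // G.Adj u w}) : Equiv.Perm (Arc G) where
  toFun b := ⟨(b.1.2, (σ b.1.2 ⟨b.1.1, b.2.symm⟩).1), (σ b.1.2 ⟨b.1.1, b.2.symm⟩).2⟩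
  invFun a := ⟨(((σ a.1.1)⁻¹ ⟨a.1.2, a.2⟩).1, a.1.1),
    (((σ a.1.1)⁻¹ ⟨a.1.2, a.2⟩).2).symm⟩
  left_inv := by
    rintro ⟨⟨i, j⟩, h⟩
    apply Subtype.ext
    simp only []
    have : (σ j)⁻¹ ⟨(σ j ⟨i, h.symm⟩).1, (σ j ⟨i, h.symm⟩).2⟩ = ⟨i, h.symm⟩ := by
      rw [Subtype.eta]; exact Equiv.symm_apply_apply _ _
    rw [this]
  right_inv := by
    rintro ⟨⟨i, j⟩, h⟩
    apply Subtype.ext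
    simp only []
    have : σ i ⟨((σ i)⁻¹ ⟨j, h⟩).1, ((σ i)⁻¹ ⟨j, h⟩).2⟩ = ⟨j, h⟩ := by
      rw [Subtype.eta]; exact Equiv.apply_symm_apply _ _
    rw [this]

lemma shiftOp_eq_permMat (G : SimpleGraph V) [DecidableRel G.Adj]
    (σ : ∀ u : V, Equiv.Perm {w : V // G.Adj u w}) :
    shiftOp G σ = permMat (arcPerm G σ) := by
  ext ⟨⟨i, j⟩, hij⟩ ⟨⟨k, l⟩, hkl⟩
  simp [shiftOp, permMat, arcPerm, Subtype.ext_iff, Prod.ext_iff, Equiv.coe_fn_mk]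

lemma shiftOp_mul_conjT_self (G : SimpleGraph V) [DecidableRel G.Adj]
    (σ : ∀ u : V, Equiv.Perm {w : V // G.Adj u w}) :
    shiftOp G σ * (shiftOp G σ)ᴴ = 1 := by
  rw [shiftOp_eq_permMat, permMat_mul_conjT_self]

lemma coinOp_conjT (G : SimpleGraph V) [DecidableRel G.Adj]
    (K : ∀ u : V, Matrix {w : V // G.Adj u w} {w : V // G.Adj u w} ℂ) :
    (coinOp G K)ᴴ = coinOp G (fun u => (K u)ᴴ) := by
  ext ⟨⟨i, j⟩, hij⟩ ⟨⟨k, l⟩, hkl⟩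
  simp only [Matrix.conjTranspose_apply, coinOp]
  by_cases h : i = k
  · subst h; simp [Matrix.conjTranspose_apply]
  · rw [dif_neg (fun h' => h h'.symm), dif_neg h, star_zero]

lemma coinOp_mul (G : SimpleGraph V) [DecidableRel G.Adj]
    (K L : ∀ u : V, Matrix {w : V // G.Adj u w} {w : V // G.Adj u w} ℂ) :
    coinOp G (fun u => K u * L u) = coinOp G K * coinOp G L := by
  ext ⟨⟨i, j⟩, hij⟩ ⟨⟨k, l⟩, hkl⟩
  rw [Matrix.mul_apply,
    ← Equiv.sum_comp (arcSigma G) (fun c => coinOp G K ⟨(i, j), hij⟩ c * coinOp G L c ⟨(k, l), hkl⟩)]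
  rw [show (Finset.univ : Finset (Σ u : V, {w : V // G.Adj u w}))
      = Finset.univ.sigma fun _ => Finset.univ from rfl, Finset.sum_sigma]
  rw [Finset.sum_eq_single k]
  · simp only [coinOp, arcSigma, Equiv.coe_fn_mk]
    by_cases h : i = k
    · subst h
      simp [Matrix.mul_apply]
    · simp only [dif_neg h]
      simp
      intro h'; exact absurd h' h
  · intro u _ hu
    apply Finset.sum_eq_zero
    intro w _
    simp only [coinOp, arcSigma, Equiv.coe_fn_mk]
    simp [hu]
  · intro h; exact absurd (Finset.mem_univ k) h

lemma shiftOp_decomp (G : SimpleGraph V) [DecidableRel G.Adj]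
    (σ : ∀ u : V, Equiv.Perm {w : V // G.Adj u w}) :
    shiftOp G σ = coinOp G (fun j => permMat (σ j)) * shiftOp G (ffFam G) := by
  ext ⟨⟨i, j⟩, hij⟩ ⟨⟨k, l⟩, hkl⟩
  rw [Matrix.mul_apply]
  have hff : ∀ c : Arc G, shiftOp G (ffFam G) c ⟨(k, l), hkl⟩
      = if c = ⟨(l, k), hkl.symm⟩ then 1 else 0 := by
    rintro ⟨⟨x, y⟩, hxy⟩
    simp [shiftOp, ffFam, Subtype.ext_iff, Prod.ext_iff]
    exact if_congr Iff.rfl rfl rfl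
  have : ∀ c : Arc G, coinOp G (fun j => permMat (σ j)) ⟨(i, j), hij⟩ c
      * shiftOp G (ffFam G) c ⟨(k, l), hkl⟩
      = if c = ⟨(l, k), hkl.symm⟩ then
          coinOp G (fun j => permMat (σ j)) ⟨(i, j), hij⟩ c else 0 := by
    intro c; rw [hff c]; split_ifs <;> simp
  rw [Finset.sum_congr rfl fun c _ => this c,
    Finset.sum_ite_eq' Finset.univ (⟨(l, k), hkl.symm⟩ : Arc G)]
  simp only [Finset.mem_univ, if_true, coinOp, shiftOp]
  by_cases h : i = l
  · subst h
    simp [permMat, Subtype.ext_iff]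
  · rw [dif_neg h, if_neg (fun h' => h h'.1)]

lemma ffShift_conjT (G : SimpleGraph V) [DecidableRel G.Adj] :
    (shiftOp G (ffFam G))ᴴ = shiftOp G (ffFam G) := by
  ext ⟨⟨i, j⟩, hij⟩ ⟨⟨k, l⟩, hkl⟩
  simp only [Matrix.conjTranspose_apply, shiftOp, ffFam, Equiv.refl_apply]
  by_cases h1 : k = j
  · by_cases h2 : l = i
    · subst h1; subst h2; simp
    · have h2' : ¬ i = l := fun h => h2 h.symm; simp [h2, h2']
  · have h1' : ¬ j = k := fun h => h1 h.symm; simp [h1, h1']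

end AuxLemmas

/-- Every A-type QW with an arbitrary shift family is expressed through the
A-type QW with flip-flop shift: with `P^{(j)}` the permutation matrix of `σ_j` and
`H̃_j = H_j·P^{(j)}`, `U^A_σ[H] = S_σ·(U^A_ff[H̃†])†·S_σ†`. -/
theorem aWalk_eq_conj_aWalk_ff {V : Type*} [Fintype V] [DecidableEq V]
    (G : SimpleGraph V) [DecidableRel G.Adj] (hG : G.Connected)
    (σ : ∀ u : V, Equiv.Perm {w : V // G.Adj u w})
    (H : ∀ u : V, Matrix {w : V // G.Adj u w} {w : V // G.Adj u w} ℂ)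
    (hH : ∀ u : V, H u ∈ Matrix.unitaryGroup {w : V // G.Adj u w} ℂ) :
    aWalk G σ H =
      shiftOp G σ * (aWalk G (ffFam G) (fun j => (H j * permMat (σ j))ᴴ))ᴴ * (shiftOp G σ)ᴴ := by
  unfold aWalk
  rw [Matrix.conjTranspose_mul, coinOp_conjT, ffShift_conjT]
  have hHH : (fun u => ((H u * permMat (σ u))ᴴ)ᴴ) = fun u => H u * permMat (σ u) := by
    funext u; rw [Matrix.conjTranspose_conjTranspose]
  rw [hHH, coinOp_mul, mul_assoc (coinOp G H), ← shiftOp_decomp G σ]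
  rw [show shiftOp G σ * (coinOp G H * shiftOp G σ) * (shiftOp G σ)ᴴ
      = shiftOp G σ * coinOp G H * (shiftOp G σ * (shiftOp G σ)ᴴ) by
    simp only [mul_assoc]]
  rw [shiftOp_mul_conjT_self, mul_one]
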